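/- Let δ : L_S → {0,1} be a filter satisfying: δ(L) = 1 for every clean subset L ∈ L̄_S, and δ(L) = 0 whenever |L ∩ A| ≥ K_m + 1. Let F = {L ∈ L̄ᶜ_S : δ(L) = 1} be the falsely accepted contaminated subsets and assume F is nonempty. Define p_fa = |F|/|L̄ᶜ_S|, p_N̄ = |L̄_S|/|L_S|, P_A = (1/|F|)·Σ_{L ∈ F} g(L), P_N = (1/|L̄_S|)·Σ_{L ∈ L̄_S} g(L), and P_G = (Σ_{L ∈ L_S} g(L)·δ(L)) / (Σ_{L ∈ L_S} δ(L)). Then ‖P_G − P_N‖₁ = ( p_fa·(1 − p_N̄) / ( p_N̄ + p_fa·(1 − p_N̄) ) ) · ‖P_A − P_N‖₁. (Theorem 3) -/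

import Mathlib

open Finset

/-- The entrywise L1 norm of a real `N × C` matrix: the sum of the absolute
values of its entries. -/
noncomputable def entryL1 {N C : ℕ} (Z : Matrix (Fin N) (Fin C) ℝ) : ℝ :=
  ∑ i, ∑ j, |Z i j|

lemma entryL1_smul {N C : ℕ} (r : ℝ) (Z : Matrix (Fin N) (Fin C) ℝ) :
    entryL1 (r • Z) = |r| * entryL1 Z := by
  simp [entryL1, abs_mul, Finset.mul_sum]

/-- **Theorem 3 (GraphSAC).** Let `δ` be a `{0,1}`-valued filter that accepts
every clean subset and rejects every subset containing at least `K_m + 1`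
anomalies. With `F` the (nonempty) set of falsely accepted contaminated
subsets, `p_fa = |F|/|L̄ᶜ_S|`, `p_N̄ = |L̄_S|/|L_S|`, `P_A` the average of `g`
over `F`, `P_N` the average over clean subsets, and
`P_G = (Σ_L g(L)·δ(L)) / (Σ_L δ(L))`, it holds that
`‖P_G − P_N‖₁ = (p_fa·(1−p_N̄)/(p_N̄ + p_fa·(1−p_N̄))) · ‖P_A − P_N‖₁`. -/
theorem graphsac_theorem3 {N C K S Km : ℕ}
    (hK : 1 ≤ K) (hS : 1 ≤ S) (hSNK : S ≤ N - K) (hKm : 1 ≤ Km)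
    (A : Finset (Fin N)) (hA : A.card = K)
    (g : Finset (Fin N) → Matrix (Fin N) (Fin C) ℝ)
    (LS LbarS LbarcS : Finset (Finset (Fin N)))
    (hLS : LS = Finset.powersetCard S (Finset.univ : Finset (Fin N)))
    (hLbarS : LbarS = LS.filter (fun L => L ∩ A = ∅))
    (hLbarcS : LbarcS = LS \ LbarS)
    (δ : Finset (Fin N) → ℝ)
    (hδ01 : ∀ L ∈ LS, δ L = 0 ∨ δ L = 1)
    (hδclean : ∀ L ∈ LbarS, δ L = 1)
    (hδbig : ∀ L ∈ LS, Km + 1 ≤ (L ∩ A).card → δ L = 0)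
    (F : Finset (Finset (Fin N)))
    (hF : F = LbarcS.filter (fun L => δ L = 1))
    (hFne : F.Nonempty)
    (pfa pN : ℝ)
    (hpfa : pfa = (F.card : ℝ) / (LbarcS.card : ℝ))
    (hpN : pN = (LbarS.card : ℝ) / (LS.card : ℝ))
    (PA PN PG : Matrix (Fin N) (Fin C) ℝ)
    (hPA : PA = ((F.card : ℝ))⁻¹ • ∑ L ∈ F, g L)
    (hPN : PN = ((LbarS.card : ℝ))⁻¹ • ∑ L ∈ LbarS, g L)
    (hPG : PG = (∑ L ∈ LS, δ L)⁻¹ • ∑ L ∈ LS, δ L • g L) :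
    entryL1 (PG - PN) =
      (pfa * (1 - pN) / (pN + pfa * (1 - pN))) * entryL1 (PA - PN) := by
  classical
  have hLbarS_sub : LbarS ⊆ LS := by rw [hLbarS]; exact Finset.filter_subset _ _
  have hF_sub : F ⊆ LbarcS := by rw [hF]; exact Finset.filter_subset _ _
  have hLbarcS_sub : LbarcS ⊆ LS := by rw [hLbarcS]; exact Finset.sdiff_subset
  have hLbarS_ne : LbarS.Nonempty := by
    have hcompl : (Aᶜ : Finset (Fin N)).card = N - K := by
      simp [Finset.card_compl, hA]
    obtain ⟨L, hLsub, hLcard⟩ :=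
      Finset.exists_subset_card_eq (le_trans hSNK hcompl.ge)
    refine ⟨L, ?_⟩
    rw [hLbarS, Finset.mem_filter, hLS, Finset.mem_powersetCard]
    refine ⟨⟨Finset.subset_univ _, hLcard⟩, ?_⟩
    apply Finset.eq_empty_iff_forall_notMem.2
    intro x hx
    rcases Finset.mem_inter.1 hx with ⟨hxL, hxA⟩
    exact (Finset.mem_compl.1 (hLsub hxL)) hxA
  set b : ℝ := (LbarS.card : ℝ) with hbdef
  set f : ℝ := (F.card : ℝ) with hfdef
  set c : ℝ := (LbarcS.card : ℝ) with hcdef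
  set n : ℝ := (LS.card : ℝ) with hndef
  clear_value b f c n
  have hb : 0 < b := by rw [hbdef]; exact_mod_cast Finset.card_pos.2 hLbarS_ne
  have hf : 0 < f := by rw [hfdef]; exact_mod_cast Finset.card_pos.2 hFne
  have hc : 0 < c := by
    have : LbarcS.Nonempty := ⟨hFne.choose, hF_sub hFne.choose_spec⟩
    rw [hcdef]; exact_mod_cast Finset.card_pos.2 this
  have hbf : (0:ℝ) < b + f := by linarith
  have hnbcN : LS.card = LbarS.card + LbarcS.card := by
    have h1 : LbarcS.card = LS.card - LbarS.card := by
      rw [hLbarcS]; exact Finset.card_sdiff_of_subset hLbarS_sub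
    have h2 := Finset.card_le_card hLbarS_sub
    omega
  have hnbc : n = b + c := by rw [hbdef, hcdef, hndef]; exact_mod_cast hnbcN
  have hδif : ∀ L ∈ LbarcS, δ L = if δ L = 1 then (1:ℝ) else 0 := by
    intro L hL
    rcases hδ01 L (hLbarcS_sub hL) with h | h <;> simp [h]
  have hsumδ : ∑ L ∈ LS, δ L = b + f := by
    have hsplit : ∑ L ∈ LbarcS, δ L + ∑ L ∈ LbarS, δ L = ∑ L ∈ LS, δ L := by
      rw [hLbarcS]; exact Finset.sum_sdiff hLbarS_sub
    have h1 : ∑ L ∈ LbarS, δ L = b := by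
      rw [Finset.sum_congr rfl (fun L hL => hδclean L hL)]
      simp [hbdef]
    have h2 : ∑ L ∈ LbarcS, δ L = f := by
      calc ∑ L ∈ LbarcS, δ L
          = ∑ L ∈ LbarcS, if δ L = 1 then (1:ℝ) else 0 :=
            Finset.sum_congr rfl hδif
        _ = ((LbarcS.filter (fun L => δ L = 1)).card : ℝ) := by
            simp [Finset.sum_boole]
        _ = f := by rw [hfdef, hF]
    linarith [hsplit]
  have hsumg : ∑ L ∈ LS, δ L • g L = b • PN + f • PA := by
    have hsplit : ∑ L ∈ LbarcS, δ L • g L + ∑ L ∈ LbarS, δ L • g L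
        = ∑ L ∈ LS, δ L • g L := by
      rw [hLbarcS]; exact Finset.sum_sdiff hLbarS_sub
    have h1 : ∑ L ∈ LbarS, δ L • g L = b • PN := by
      rw [hPN, smul_smul, mul_inv_cancel₀ hb.ne', one_smul]
      exact Finset.sum_congr rfl (fun L hL => by rw [hδclean L hL, one_smul])
    have h2 : ∑ L ∈ LbarcS, δ L • g L = f • PA := by
      rw [hPA, smul_smul, mul_inv_cancel₀ hf.ne', one_smul, hF,
        Finset.sum_filter]
      refine Finset.sum_congr rfl (fun L hL => ?_)
      rcases hδ01 L (hLbarcS_sub hL) with h | h <;> simp [h]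
    rw [← hsplit, h1, h2, add_comm]
  have hPGeq : PG - PN = ((b + f)⁻¹ * f) • (PA - PN) := by
    rw [hPG, hsumδ, hsumg]
    match_scalars <;> field_simp <;> ring
  rw [hPGeq, entryL1_smul]
  have habs : |(b + f)⁻¹ * f| = (b + f)⁻¹ * f := abs_of_pos (by positivity)
  rw [habs]
  have hcoef : pfa * (1 - pN) / (pN + pfa * (1 - pN)) = (b + f)⁻¹ * f := by
    rw [hpfa, hpN, hnbc]
    have hden : b / (b + c) + f / c * (1 - b / (b + c)) = (b + f) / (b + c) := by
      field_simp; ring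
    rw [hden]
    rw [show (1 : ℝ) - b / (b + c) = c / (b + c) by field_simp; ring]
    field_simp
  rw [hcoef]
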